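/- Let R > 0 and let h₁, h₂ : [0, R] → ℝ be twice continuously differentiable functions with h_i''(x) < 0 for all x ∈ [0, R] (i = 1, 2), with h₁(x) ≤ h₂(x) for all x ∈ [0, R], and with h₁(0) = h₂(0) and h₁(R) = h₂(R). Then ∫₀^R (h₁′(x))² dx ≤ ∫₀^R (h₂′(x))² dx, and the inequality is strict unless h₁ = h₂ on [0, R]. -/

import Mathlib

open Set

/-- If `h₁ ≤ h₂` are twice continuously differentiable strictly concave
(`hᵢ'' < 0`) functions on `[0, R]` agreeing at the endpoints, then
`∫₀ᴿ (h₁')² ≤ ∫₀ᴿ (h₂')²`, with strict inequality unless `h₁ = h₂` on `[0, R]`.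
Here `fᵢ` and `gᵢ` denote the first and second derivatives of `hᵢ` on `[0, R]`. -/
theorem sq_deriv_integral_mono_of_concave (R : ℝ) (hR : 0 < R)
    (h₁ h₂ f₁ f₂ g₁ g₂ : ℝ → ℝ)
    (hd1 : ∀ x ∈ Icc (0 : ℝ) R, HasDerivWithinAt h₁ (f₁ x) (Icc (0 : ℝ) R) x)
    (hd2 : ∀ x ∈ Icc (0 : ℝ) R, HasDerivWithinAt h₂ (f₂ x) (Icc (0 : ℝ) R) x)
    (hdd1 : ∀ x ∈ Icc (0 : ℝ) R, HasDerivWithinAt f₁ (g₁ x) (Icc (0 : ℝ) R) x)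
    (hdd2 : ∀ x ∈ Icc (0 : ℝ) R, HasDerivWithinAt f₂ (g₂ x) (Icc (0 : ℝ) R) x)
    (hc1 : ContinuousOn g₁ (Icc (0 : ℝ) R))
    (hc2 : ContinuousOn g₂ (Icc (0 : ℝ) R))
    (hneg1 : ∀ x ∈ Icc (0 : ℝ) R, g₁ x < 0)
    (hneg2 : ∀ x ∈ Icc (0 : ℝ) R, g₂ x < 0)
    (hle : ∀ x ∈ Icc (0 : ℝ) R, h₁ x ≤ h₂ x)
    (hend0 : h₁ 0 = h₂ 0) (hendR : h₁ R = h₂ R) :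
    (∫ x in (0 : ℝ)..R, (f₁ x) ^ 2) ≤ (∫ x in (0 : ℝ)..R, (f₂ x) ^ 2) ∧
      ((∫ x in (0 : ℝ)..R, (f₁ x) ^ 2) = (∫ x in (0 : ℝ)..R, (f₂ x) ^ 2) →
        EqOn h₁ h₂ (Icc (0 : ℝ) R)) := by
  have cf₁ : ContinuousOn f₁ (Icc (0 : ℝ) R) := fun x hx => (hdd1 x hx).continuousWithinAt
  have cf₂ : ContinuousOn f₂ (Icc (0 : ℝ) R) := fun x hx => (hdd2 x hx).continuousWithinAt
  have ch₁ : ContinuousOn h₁ (Icc (0 : ℝ) R) := fun x hx => (hd1 x hx).continuousWithinAt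
  have ch₂ : ContinuousOn h₂ (Icc (0 : ℝ) R) := fun x hx => (hd2 x hx).continuousWithinAt
  have cu : ContinuousOn (fun x => h₂ x - h₁ x) (Icc (0 : ℝ) R) := ch₂.sub ch₁
  -- integrability facts
  have i1 : IntervalIntegrable (fun x => (f₁ x) ^ 2) MeasureTheory.volume 0 R :=
    (cf₁.pow 2).intervalIntegrable_of_Icc hR.le
  have i2 : IntervalIntegrable (fun x => (f₂ x) ^ 2) MeasureTheory.volume 0 R :=
    (cf₂.pow 2).intervalIntegrable_of_Icc hR.le
  have iA : IntervalIntegrable (fun x => (f₂ x - f₁ x) ^ 2) MeasureTheory.volume 0 R :=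
    ((cf₂.sub cf₁).pow 2).intervalIntegrable_of_Icc hR.le
  have iB : IntervalIntegrable (fun x => -g₁ x * (h₂ x - h₁ x)) MeasureTheory.volume 0 R :=
    (hc1.neg.mul cu).intervalIntegrable_of_Icc hR.le
  have iC : IntervalIntegrable (fun x => f₁ x * (f₂ x - f₁ x)) MeasureTheory.volume 0 R :=
    (cf₁.mul (cf₂.sub cf₁)).intervalIntegrable_of_Icc hR.le
  have iD : IntervalIntegrable (fun x => g₁ x * (h₂ x - h₁ x)) MeasureTheory.volume 0 R :=
    (hc1.mul cu).intervalIntegrable_of_Icc hR.le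
  -- integration by parts via FTC
  have hFTC : (∫ x in (0:ℝ)..R,
      (g₁ x * (h₂ x - h₁ x) + f₁ x * (f₂ x - f₁ x))) = 0 := by
    have := intervalIntegral.integral_eq_sub_of_hasDeriv_right_of_le hR.le
      (f := fun x => f₁ x * (h₂ x - h₁ x))
      (f' := fun x => g₁ x * (h₂ x - h₁ x) + f₁ x * (f₂ x - f₁ x))
      (cf₁.mul cu)
      (fun x hx => by
        have hmem : Icc (0:ℝ) R ∈ nhds x := Icc_mem_nhds hx.1 hx.2
        have hxI : x ∈ Icc (0:ℝ) R := Ioo_subset_Icc_self hx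
        have d1 := (hd1 x hxI).hasDerivAt hmem
        have d2 := (hd2 x hxI).hasDerivAt hmem
        have dd1 := (hdd1 x hxI).hasDerivAt hmem
        exact (dd1.mul (d2.sub d1)).hasDerivWithinAt)
      (iD.add iC)
    rw [this]
    show f₁ R * (h₂ R - h₁ R) - f₁ 0 * (h₂ 0 - h₁ 0) = 0
    have hu0 : h₂ 0 - h₁ 0 = 0 := by rw [hend0]; ring
    have huR : h₂ R - h₁ R = 0 := by rw [hendR]; ring
    rw [hu0, huR]; ring
  have hsplit : (∫ x in (0:ℝ)..R, f₁ x * (f₂ x - f₁ x))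
      = ∫ x in (0:ℝ)..R, -g₁ x * (h₂ x - h₁ x) := by
    rw [intervalIntegral.integral_add iD iC] at hFTC
    have : (∫ x in (0:ℝ)..R, -g₁ x * (h₂ x - h₁ x))
        = - ∫ x in (0:ℝ)..R, g₁ x * (h₂ x - h₁ x) := by
      rw [← intervalIntegral.integral_neg]
      congr 1; funext x; ring
    rw [this]; linarith
  have hdecomp : (∫ x in (0:ℝ)..R, (f₂ x) ^ 2) - (∫ x in (0:ℝ)..R, (f₁ x) ^ 2)
      = (∫ x in (0:ℝ)..R, (f₂ x - f₁ x) ^ 2)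
        + 2 * ∫ x in (0:ℝ)..R, -g₁ x * (h₂ x - h₁ x) := by
    rw [← intervalIntegral.integral_sub i2 i1]
    have : (∫ x in (0:ℝ)..R, ((f₂ x) ^ 2 - (f₁ x) ^ 2))
        = ∫ x in (0:ℝ)..R, ((f₂ x - f₁ x) ^ 2 + 2 * (f₁ x * (f₂ x - f₁ x))) := by
      congr 1; funext x; ring
    rw [this, intervalIntegral.integral_add iA (iC.const_mul 2),
      intervalIntegral.integral_const_mul, hsplit]
  have hA : 0 ≤ ∫ x in (0:ℝ)..R, (f₂ x - f₁ x) ^ 2 :=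
    intervalIntegral.integral_nonneg hR.le (fun x _ => sq_nonneg _)
  have hB : 0 ≤ ∫ x in (0:ℝ)..R, -g₁ x * (h₂ x - h₁ x) :=
    intervalIntegral.integral_nonneg hR.le (fun x hx =>
      mul_nonneg (neg_nonneg.2 (hneg1 x hx).le) (sub_nonneg.2 (hle x hx)))
  refine ⟨by linarith, ?_⟩
  intro heq x hx
  have hB0 : (∫ x in (0:ℝ)..R, -g₁ x * (h₂ x - h₁ x)) = 0 := by linarith
  by_contra hne
  have hux : 0 < h₂ x - h₁ x := lt_of_le_of_ne (sub_nonneg.2 (hle x hx)) (by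
    intro h; exact hne (by linarith [h.symm]))
  have hx0 : x ≠ 0 := by rintro rfl; rw [hend0] at hux; simp at hux
  have hxR : x ≠ R := by rintro rfl; rw [hendR] at hux; simp at hux
  have hxIoo : x ∈ Ioo (0:ℝ) R := ⟨hx.1.lt_of_ne (Ne.symm hx0), hx.2.lt_of_ne hxR⟩
  -- ψ is positive near x
  have hψx : 0 < -g₁ x * (h₂ x - h₁ x) :=
    mul_pos (neg_pos.2 (hneg1 x hx)) hux
  have hcψ : ContinuousAt (fun y => -g₁ y * (h₂ y - h₁ y)) x :=
    ((hc1.neg.mul cu) x hx).continuousAt (Icc_mem_nhds hxIoo.1 hxIoo.2)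
  have hev : ∀ᶠ y in nhds x, 0 < -g₁ y * (h₂ y - h₁ y) :=
    hcψ.eventually (eventually_gt_nhds hψx)
  rcases Metric.eventually_nhds_iff.1 hev with ⟨ε, hε, hball⟩
  set a := max 0 (x - ε / 2) with ha
  set b := min R (x + ε / 2) with hb
  have hax : a < x := max_lt hxIoo.1 (by linarith)
  have hxb : x < b := lt_min hxIoo.2 (by linarith)
  have hsub : Ioo a b ⊆ Function.support (fun y => -g₁ y * (h₂ y - h₁ y)) ∩ Ioc 0 R := by
    intro y hy
    have hy0 : 0 < y := lt_of_le_of_lt (le_max_left _ _) hy.1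
    have hyR : y ≤ R := le_of_lt (lt_of_lt_of_le hy.2 (min_le_left _ _))
    have hdy : dist y x < ε := by
      rw [Real.dist_eq, abs_sub_lt_iff]
      constructor
      · have : y < x + ε / 2 := lt_of_lt_of_le hy.2 (min_le_right _ _)
        linarith
      · have : x - ε / 2 < y := lt_of_le_of_lt (le_max_right _ _) hy.1
        linarith
    exact ⟨Function.mem_support.2 (hball hdy).ne', hy0, hyR⟩
  have hae : 0 ≤ᵐ[MeasureTheory.volume.restrict (uIoc (0:ℝ) R)]
      fun y => -g₁ y * (h₂ y - h₁ y) := by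
    rw [uIoc_of_le hR.le]
    refine (MeasureTheory.ae_restrict_iff' measurableSet_Ioc).2
      (Filter.Eventually.of_forall fun y hy => ?_)
    exact mul_nonneg (neg_nonneg.2 (hneg1 y ⟨hy.1.le, hy.2⟩).le)
      (sub_nonneg.2 (hle y ⟨hy.1.le, hy.2⟩))
  have hpos : 0 < ∫ y in (0:ℝ)..R, -g₁ y * (h₂ y - h₁ y) := by
    rw [intervalIntegral.integral_pos_iff_support_of_nonneg_ae' hae iB]
    refine ⟨hR, lt_of_lt_of_le ?_ (MeasureTheory.measure_mono hsub)⟩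
    rw [Real.volume_Ioo]
    exact ENNReal.ofReal_pos.2 (by linarith)
  linarith
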